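/- Integration by parts for the T₂ integral: for a > 0, s > 0, β > 0, α > 0, ∫₀^∞ ω·exp(−aω²/2)·γ(1/α, β^α·ω^α) dω = (α·β/a)·∫₀^∞ exp(−β^α·ω^α)·exp(−a·ω²/2) dω. -/

import Mathlib

open Real MeasureTheory Set Filter

/-- Lower incomplete Gamma function γ(s, x) = ∫₀^x t^{s-1} e^{-t} dt. -/
noncomputable def lowerGamma (s x : ℝ) : ℝ := ∫ t in (0 : ℝ)..x, t ^ (s - 1) * Real.exp (-t)

theorem t2_integration_by_parts (a β α : ℝ) (ha : 0 < a) (hβ : 0 < β) (hα : 0 < α) :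
    ∫ ω in Set.Ioi (0 : ℝ), ω * Real.exp (-(a * ω ^ 2 / 2)) * lowerGamma (1 / α) (β ^ α * ω ^ α)
      = (α * β / a) * ∫ ω in Set.Ioi (0 : ℝ), Real.exp (-(β ^ α * ω ^ α)) * Real.exp (-(a * ω ^ 2 / 2)) := by
  have hs : 0 < 1 / α := by positivity
  set s : ℝ := 1 / α with hs_def
  set c : ℝ := β ^ α with hc_def
  have hc0 : 0 < c := Real.rpow_pos_of_pos hβ α
  set f : ℝ → ℝ := fun t => t ^ (s - 1) * Real.exp (-t) with hf_def
  have hint : IntegrableOn f (Set.Ioi (0:ℝ)) :=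
    (Real.GammaIntegral_convergent hs).congr_fun (fun t _ => mul_comm _ _) measurableSet_Ioi
  have hII : ∀ x : ℝ, 0 ≤ x → IntervalIntegrable f volume 0 x := by
    intro x hx
    rw [intervalIntegrable_iff_integrableOn_Ioc_of_le hx]
    exact hint.mono_set Set.Ioc_subset_Ioi_self
  set C : ℝ := ∫ t in Set.Ioi (0:ℝ), f t with hC_def
  have lg_nonneg : ∀ x : ℝ, 0 ≤ x → 0 ≤ lowerGamma s x := fun x hx =>
    intervalIntegral.integral_nonneg hx
      (fun t ht => mul_nonneg (Real.rpow_nonneg ht.1 _) (Real.exp_pos _).le)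
  have lg_le_C : ∀ x : ℝ, 0 ≤ x → lowerGamma s x ≤ C := by
    intro x hx
    rw [lowerGamma, intervalIntegral.integral_of_le hx]
    refine setIntegral_mono_set hint ?_ (HasSubset.Subset.eventuallyLE Set.Ioc_subset_Ioi_self)
    filter_upwards [ae_restrict_mem measurableSet_Ioi] with t ht
    exact mul_nonneg (Real.rpow_nonneg ht.le _) (Real.exp_pos _).le
  have lg_le_pow : ∀ x : ℝ, 0 ≤ x → lowerGamma s x ≤ x ^ s / s := by
    intro x hx
    have h1 : lowerGamma s x ≤ ∫ t in (0:ℝ)..x, t ^ (s-1) := by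
      refine intervalIntegral.integral_mono_on hx (hII x hx)
        (intervalIntegral.intervalIntegrable_rpow' (by linarith)) (fun t ht => ?_)
      calc t ^ (s-1) * Real.exp (-t) ≤ t ^ (s-1) * 1 :=
            mul_le_mul_of_nonneg_left
              (Real.exp_le_one_iff.mpr (neg_nonpos.mpr ht.1)) (Real.rpow_nonneg ht.1 _)
        _ = t ^ (s-1) := mul_one _
    have h2 : ∫ t in (0:ℝ)..x, t ^ (s-1) = x ^ s / s := by
      rw [integral_rpow (Or.inl (by linarith))]
      simp [Real.zero_rpow hs.ne', sub_add_cancel]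
    linarith [h1, h2.le]
  -- the functions
  set u : ℝ → ℝ := fun ω => lowerGamma s (c * ω ^ α) with hu_def
  set u' : ℝ → ℝ := fun ω => α * β * Real.exp (-(c * ω ^ α)) with hu'_def
  set v : ℝ → ℝ := fun ω => -(Real.exp (-(a * ω ^ 2 / 2)) / a) with hv_def
  set v' : ℝ → ℝ := fun ω => ω * Real.exp (-(a * ω ^ 2 / 2)) with hv'_def
  have hfc : ∀ t : ℝ, 0 < t → ContinuousAt f t := by
    intro t ht
    exact (Real.continuousAt_rpow_const t _ (Or.inl ht.ne')).mul
      (Real.continuous_exp.continuousAt.comp continuousAt_id.neg)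
  have hu : ∀ ω ∈ Set.Ioi (0:ℝ), HasDerivAt u (u' ω) ω := by
    intro ω hω
    have hω0 : 0 < ω := hω
    have hx0 : 0 < c * ω ^ α := mul_pos hc0 (Real.rpow_pos_of_pos hω0 α)
    have h1 : HasDerivAt (lowerGamma s) (f (c * ω ^ α)) (c * ω ^ α) := by
      refine intervalIntegral.integral_hasDerivAt_right (hII _ hx0.le) ?_ (hfc _ hx0)
      exact ContinuousAt.stronglyMeasurableAtFilter isOpen_Ioi
        (fun t ht => hfc t ht) _ hx0
    have h2 : HasDerivAt (fun ω : ℝ => c * ω ^ α) (c * (α * ω ^ (α - 1))) ω :=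
      (Real.hasDerivAt_rpow_const (Or.inl hω0.ne')).const_mul c
    have h3 := h1.comp ω h2
    have key : f (c * ω ^ α) * (c * (α * ω ^ (α - 1))) = u' ω := by
      have hβω : 0 < β * ω := mul_pos hβ hω0
      have hcw : c * ω ^ α = (β * ω) ^ α := (Real.mul_rpow hβ.le hω0.le).symm
      have e1 : (c * ω ^ α) ^ (s - 1) = (β * ω) ^ (1 - α) := by
        rw [hcw, ← Real.rpow_mul hβω.le]
        congr 1
        rw [hs_def]
        field_simp
      have e2 : (β * ω) ^ (1 - α) = β ^ (1 - α) * ω ^ (1 - α) :=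
        Real.mul_rpow hβ.le hω0.le
      have e3 : β ^ (1 - α) * β ^ α = β := by
        rw [← Real.rpow_add hβ]; simp
      have e4 : ω ^ (1 - α) * ω ^ (α - 1) = 1 := by
        rw [← Real.rpow_add hω0]; simp
      show (c * ω ^ α) ^ (s - 1) * Real.exp (-(c * ω ^ α)) * (c * (α * ω ^ (α - 1)))
          = α * β * Real.exp (-(c * ω ^ α))
      rw [e1, e2, hc_def]
      calc β ^ (1 - α) * ω ^ (1 - α) * Real.exp (-(c * ω ^ α)) * (β ^ α * (α * ω ^ (α - 1)))
          = α * (β ^ (1 - α) * β ^ α) * (ω ^ (1 - α) * ω ^ (α - 1)) * Real.exp (-(c * ω ^ α)) := by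
            ring
        _ = α * β * Real.exp (-(c * ω ^ α)) := by rw [e3, e4]; ring
    rw [← key]
    exact h3
  have hv : ∀ ω : ℝ, HasDerivAt v (v' ω) ω := by
    intro ω
    have h : HasDerivAt (fun ω : ℝ => -(a * ω ^ 2 / 2)) (-(a * ω)) ω := by
      have := (((hasDerivAt_pow 2 ω).const_mul a).div_const 2).fun_neg
      refine this.congr_deriv ?_
      push_cast
      ring
    have heq : v' ω = -(Real.exp (-(a * ω ^ 2 / 2)) * -(a * ω) / a) := by
      rw [hv'_def]
      field_simp
    rw [heq]
    exact (h.exp.div_const a).neg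
  -- integrability
  have hGauss : Integrable (fun ω : ℝ => Real.exp (-(a * ω ^ 2 / 2))) := by
    have heq : (fun ω : ℝ => Real.exp (-(a * ω ^ 2 / 2)))
        = fun ω : ℝ => Real.exp (-(a/2) * ω ^ 2) := by
      funext ω; congr 1; ring
    rw [heq]
    exact integrable_exp_neg_mul_sq (by positivity)
  have hMul : Integrable (fun ω : ℝ => ω * Real.exp (-(a * ω ^ 2 / 2))) := by
    have heq : (fun ω : ℝ => ω * Real.exp (-(a * ω ^ 2 / 2)))
        = fun ω : ℝ => ω * Real.exp (-(a/2) * ω ^ 2) := by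
      funext ω; congr 2; ring
    rw [heq]
    exact integrable_mul_exp_neg_mul_sq (by positivity)
  have hu_cont : ContinuousOn u (Set.Ioi (0:ℝ)) :=
    fun ω hω => (hu ω hω).continuousAt.continuousWithinAt
  have hv'_cont : Continuous v' := by
    exact continuous_id.mul (Real.continuous_exp.comp (by continuity))
  have hv_cont : Continuous v := by
    exact ((Real.continuous_exp.comp (by continuity)).div_const a).neg
  have hu'_cont : ContinuousOn u' (Set.Ioi (0:ℝ)) := by
    intro ω hω
    have hω0 : (0:ℝ) < ω := hω
    have : ContinuousAt u' ω :=
      (Real.continuous_exp.continuousAt.comp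
        (((Real.continuousAt_rpow_const ω α (Or.inl hω0.ne')).const_mul c).neg)).const_mul (α * β)
    exact this.continuousWithinAt
  have huv' : IntegrableOn (u * v') (Set.Ioi (0:ℝ)) := by
    refine Integrable.mono' ((hMul.const_mul C).integrableOn) ?_ ?_
    · exact (hu_cont.mul hv'_cont.continuousOn).aestronglyMeasurable measurableSet_Ioi
    · filter_upwards [ae_restrict_mem measurableSet_Ioi] with ω hω
      have hω0 : (0:ℝ) < ω := hω
      have hx0 : (0:ℝ) ≤ c * ω ^ α := (mul_pos hc0 (Real.rpow_pos_of_pos hω0 α)).le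
      have h1 : 0 ≤ u ω := lg_nonneg _ hx0
      have h2 : 0 ≤ v' ω := mul_nonneg hω0.le (Real.exp_pos _).le
      have : ‖u ω * v' ω‖ = u ω * v' ω := by
        rw [Real.norm_eq_abs, abs_of_nonneg (mul_nonneg h1 h2)]
      rw [Pi.mul_apply, this]
      calc u ω * v' ω ≤ C * v' ω := mul_le_mul_of_nonneg_right (lg_le_C _ hx0) h2
        _ = C * (ω * Real.exp (-(a * ω ^ 2 / 2))) := rfl
  have hu'v : IntegrableOn (u' * v) (Set.Ioi (0:ℝ)) := by
    refine Integrable.mono' ((hGauss.const_mul (α * β / a)).integrableOn) ?_ ?_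
    · exact (hu'_cont.mul hv_cont.continuousOn).aestronglyMeasurable measurableSet_Ioi
    · filter_upwards [ae_restrict_mem measurableSet_Ioi] with ω hω
      have hω0 : (0:ℝ) < ω := hω
      have hx0 : (0:ℝ) < c * ω ^ α := mul_pos hc0 (Real.rpow_pos_of_pos hω0 α)
      have hex : Real.exp (-(c * ω ^ α)) ≤ 1 :=
        Real.exp_le_one_iff.mpr (neg_nonpos.mpr hx0.le)
      have : ‖u' ω * v ω‖ = (α * β * Real.exp (-(c * ω ^ α))) * (Real.exp (-(a * ω ^ 2 / 2)) / a) := by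
        rw [Real.norm_eq_abs, abs_mul, hu'_def, hv_def]
        rw [abs_of_nonneg (by positivity), abs_neg, abs_of_nonneg (by positivity)]
      rw [Pi.mul_apply, this]
      calc (α * β * Real.exp (-(c * ω ^ α))) * (Real.exp (-(a * ω ^ 2 / 2)) / a)
          ≤ (α * β * 1) * (Real.exp (-(a * ω ^ 2 / 2)) / a) := by
            apply mul_le_mul_of_nonneg_right
            · exact mul_le_mul_of_nonneg_left hex (by positivity)
            · positivity
        _ = α * β / a * Real.exp (-(a * ω ^ 2 / 2)) := by ring
  -- limits
  have hu0 : Tendsto u (nhdsWithin 0 (Set.Ioi (0:ℝ))) (nhds 0) := by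
    have hupper : Tendsto (fun ω : ℝ => (c * ω ^ α) ^ s / s) (nhds 0) (nhds 0) := by
      have h1 : Tendsto (fun ω : ℝ => ω ^ α) (nhds 0) (nhds 0) := by
        have := (Real.continuousAt_rpow_const 0 α (Or.inr hα.le))
        simpa [Real.zero_rpow hα.ne'] using this.tendsto
      have h2 : Tendsto (fun ω : ℝ => c * ω ^ α) (nhds 0) (nhds 0) := by
        simpa using h1.const_mul c
      have h3 : Tendsto (fun x : ℝ => x ^ s) (nhds 0) (nhds 0) := by
        have := (Real.continuousAt_rpow_const 0 s (Or.inr hs.le))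
        simpa [Real.zero_rpow hs.ne'] using this.tendsto
      simpa using (h3.comp h2).div_const s
    refine tendsto_of_tendsto_of_tendsto_of_le_of_le' tendsto_const_nhds
      (hupper.mono_left nhdsWithin_le_nhds) ?_ ?_
    · filter_upwards [self_mem_nhdsWithin] with ω hω
      exact lg_nonneg _ (mul_pos hc0 (Real.rpow_pos_of_pos hω α)).le
    · filter_upwards [self_mem_nhdsWithin] with ω hω
      exact lg_le_pow _ (mul_pos hc0 (Real.rpow_pos_of_pos hω α)).le
  have hv0 : Tendsto v (nhdsWithin 0 (Set.Ioi (0:ℝ))) (nhds (-(1/a))) := by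
    have : ContinuousAt v 0 := hv_cont.continuousAt
    have h := this.tendsto.mono_left
      (nhdsWithin_le_nhds : nhdsWithin (0:ℝ) (Set.Ioi 0) ≤ nhds 0)
    simpa [hv_def] using h
  have h_zero : Tendsto (u * v) (nhdsWithin 0 (Set.Ioi (0:ℝ))) (nhds 0) := by
    have := hu0.mul hv0
    simpa [Pi.mul_def] using this
  have h_infty : Tendsto (u * v) atTop (nhds 0) := by
    have h1 : Tendsto (fun ω : ℝ => a * ω ^ 2 / 2) atTop atTop :=
      (((tendsto_pow_atTop two_ne_zero).const_mul_atTop ha).atTop_div_const two_pos)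
    have h2 : Tendsto (fun ω : ℝ => Real.exp (-(a * ω ^ 2 / 2))) atTop (nhds 0) :=
      Real.tendsto_exp_atBot.comp (tendsto_neg_atTop_atBot.comp h1)
    have h3 : Tendsto (fun ω : ℝ => C * (Real.exp (-(a * ω ^ 2 / 2)) / a)) atTop (nhds 0) := by
      simpa using ((h2.div_const a).const_mul C)
    refine squeeze_zero_norm' ?_ h3
    filter_upwards [eventually_gt_atTop (0:ℝ)] with ω hω
    have hx0 : (0:ℝ) ≤ c * ω ^ α := (mul_pos hc0 (Real.rpow_pos_of_pos hω α)).le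
    have h1' : 0 ≤ u ω := lg_nonneg _ hx0
    have : ‖u ω * v ω‖ = u ω * (Real.exp (-(a * ω ^ 2 / 2)) / a) := by
      rw [Real.norm_eq_abs, abs_mul, abs_of_nonneg h1', hv_def, abs_neg,
        abs_of_nonneg (by positivity)]
    rw [Pi.mul_apply, this]
    exact mul_le_mul_of_nonneg_right (lg_le_C _ hx0) (by positivity)
  -- integration by parts
  have key := integral_Ioi_mul_deriv_eq_deriv_mul hu (fun ω _ => hv ω) huv' hu'v h_zero h_infty
  -- rewrite the left-hand side
  have hLHS : ∫ ω in Set.Ioi (0:ℝ), ω * Real.exp (-(a * ω ^ 2 / 2)) * lowerGamma s (c * ω ^ α)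
      = ∫ ω in Set.Ioi (0:ℝ), u ω * v' ω := by
    congr 1
    funext ω
    rw [hu_def, hv'_def]
    ring
  have hRHS : ∫ ω in Set.Ioi (0:ℝ), u' ω * v ω
      = -(α * β / a * ∫ ω in Set.Ioi (0:ℝ), Real.exp (-(c * ω ^ α)) * Real.exp (-(a * ω ^ 2 / 2))) := by
    have : ∀ ω : ℝ, u' ω * v ω
        = -(α * β / a * (Real.exp (-(c * ω ^ α)) * Real.exp (-(a * ω ^ 2 / 2)))) := by
      intro ω
      rw [hu'_def, hv_def]
      ring
    rw [funext this, integral_neg, integral_const_mul]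
  rw [hLHS, key, hRHS]
  ring
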